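/- Between two consecutive relabeling times R_{q-1} < R_q, for each N with R_{q-1} < N < R_q the word W(N) contains exactly R_q - N letters equal to c (the largest gap length occurs exactly R_q - N times). -/

import Mathlib

/-- The cyclic gap after the point `{m α}` among the points `{0α}, …, {(N-1)α}` on ℝ/ℤ:
the infimum of positive circular distances from `{m α}` to the other points. -/
noncomputable def gapAt (α : ℝ) (N : ℕ) (m : ℕ) : ℝ :=
  sInf {d : ℝ | 0 < d ∧ ∃ m' : ℕ, m' < N ∧ Int.fract ((m' : ℝ) * α - (m : ℝ) * α) = d}

open Classical in
/-- The set of distinct cyclic gap lengths of the configuration `{0α}, …, {(N-1)α}`. -/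
noncomputable def gapSet (α : ℝ) (N : ℕ) : Finset ℝ :=
  (Finset.range N).image (gapAt α N)

/-- The multiset of cyclic gaps of the configuration `{0α}, …, {(N-1)α}`. -/
noncomputable def gapMult (α : ℝ) (N : ℕ) : Multiset ℝ :=
  (Multiset.range N).map (gapAt α N)

/-- Cyclic extension of the ordering permutation `u` to integer indices, mod `N`. -/
def uc (N : ℕ) (u : ℕ → ℕ) (j : ℤ) : ℕ := u ((j % (N : ℤ)).toNat)

set_option linter.unusedSectionVars false
set_option linter.unusedVariables false
set_option maxHeartbeats 1000000

namespace ThreeGap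

noncomputable def F (α : ℝ) (j : ℤ) : ℝ := Int.fract ((j : ℝ) * α)

variable {α : ℝ} {N : ℕ}

lemma F_nonneg (j : ℤ) : 0 ≤ F α j := Int.fract_nonneg _
lemma F_lt_one (j : ℤ) : F α j < 1 := Int.fract_lt_one _

lemma F_pos (hα : Irrational α) {j : ℤ} (hj : j ≠ 0) : 0 < F α j := by
  rcases lt_or_eq_of_le (F_nonneg (α := α) j) with h | h
  · exact h
  · exfalso
    have hirr : Irrational ((j : ℝ) * α) := by simpa using (hα.intCast_mul hj)
    have : (j : ℝ) * α = ⌊(j : ℝ) * α⌋ := by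
      have := h.symm; unfold F Int.fract at this; linarith
    exact hirr ⟨⌊(j : ℝ) * α⌋, this.symm⟩

lemma F_inj (hα : Irrational α) {j k : ℤ} (h : F α j = F α k) : j = k := by
  by_contra hne
  rcases Int.fract_eq_fract.1 h with ⟨z, hz⟩
  have : ((j - k : ℤ) : ℝ) * α = z := by push_cast; ring_nf; ring_nf at hz; linarith
  have hirr : Irrational (((j - k : ℤ) : ℝ) * α) := by
    simpa using hα.intCast_mul (sub_ne_zero.2 hne)
  exact hirr ⟨z, this.symm⟩

lemma F_eq_fract {s : ℤ} {x : ℝ} (z : ℤ) (h : (s : ℝ) * α - x = z) :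
    F α s = Int.fract x := Int.fract_eq_fract.2 ⟨z, h⟩

lemma F_add_eq (j k : ℤ) : F α (j + k) = Int.fract (F α j + F α k) := by
  apply F_eq_fract (α := α) (⌊(j:ℝ)*α⌋ + ⌊(k:ℝ)*α⌋)
  unfold F Int.fract; push_cast; ring

lemma F_sub_eq (j k : ℤ) : F α (j - k) = Int.fract (F α j - F α k) := by
  apply F_eq_fract (α := α) (⌊(j:ℝ)*α⌋ - ⌊(k:ℝ)*α⌋)
  unfold F Int.fract; push_cast; ring

lemma fract_self_of (x : ℝ) (h0 : 0 ≤ x) (h1 : x < 1) : Int.fract x = x :=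
  Int.fract_eq_self.2 ⟨h0, h1⟩

lemma fract_of_neg (x : ℝ) (h0 : -1 ≤ x) (h1 : x < 0) : Int.fract x = x + 1 := by
  have h : Int.fract x = Int.fract (x + 1) := by
    rw [show (1:ℝ) = ((1:ℤ):ℝ) by norm_num, Int.fract_add_intCast]
  rw [h]; exact fract_self_of _ (by linarith) (by linarith)

lemma fract_of_ge (x : ℝ) (h0 : 1 ≤ x) (h1 : x < 2) : Int.fract x = x - 1 := by
  have h : Int.fract x = Int.fract (x - 1) := by
    rw [show (1:ℝ) = ((1:ℤ):ℝ) by norm_num, Int.fract_sub_intCast]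
  rw [h]; exact fract_self_of _ (by linarith) (by linarith)

lemma F_sum_ne_one (hα : Irrational α) {j k : ℤ} (h : j + k ≠ 0) : F α j + F α k ≠ 1 := by
  intro he
  have h1 : F α (j + k) = Int.fract (F α j + F α k) := F_add_eq j k
  rw [he] at h1
  have h0 : F α (j + k) = 0 := by
    rw [h1, show (1:ℝ) = ((1:ℤ):ℝ) by norm_num, Int.fract_intCast]
  exact absurd h0 (ne_of_gt (F_pos hα h))

lemma F_neg (hα : Irrational α) {j : ℤ} (hj : j ≠ 0) : F α (-j) = 1 - F α j := by
  have h : F α (-j) = Int.fract (-((j:ℝ) * α)) := by unfold F; push_cast; ring_nf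
  rw [h, Int.fract_neg (ne_of_gt (F_pos hα hj))]; rfl

lemma dist_eq (α : ℝ) (m' m : ℕ) :
    Int.fract ((m' : ℝ) * α - (m : ℝ) * α) = F α ((m' : ℤ) - (m : ℤ)) := by
  unfold F; congr 1; push_cast; ring

noncomputable def pI (α : ℝ) (N : ℕ) : ℕ :=
  if h : (Finset.Ico 1 N).Nonempty then
    Classical.choose (Finset.exists_min_image (Finset.Ico 1 N)
      (fun k => Int.fract ((k : ℝ) * α)) h)
  else 0

noncomputable def qI (α : ℝ) (N : ℕ) : ℕ :=
  if h : (Finset.Ico 1 N).Nonempty then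
    Classical.choose (Finset.exists_max_image (Finset.Ico 1 N)
      (fun k => Int.fract ((k : ℝ) * α)) h)
  else 0

lemma Ico_ne (hN : 2 ≤ N) : (Finset.Ico 1 N).Nonempty := ⟨1, by simp; omega⟩

lemma pI_spec (hN : 2 ≤ N) : pI α N ∈ Finset.Ico 1 N ∧
    ∀ k ∈ Finset.Ico 1 N, F α (pI α N) ≤ F α k := by
  have h := Ico_ne hN
  have hs := Classical.choose_spec (Finset.exists_min_image (Finset.Ico 1 N)
      (fun k => Int.fract ((k : ℝ) * α)) h)
  rw [pI, dif_pos h]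
  obtain ⟨h1, h2⟩ := hs
  exact ⟨h1, fun k hk => by simpa [F] using h2 k hk⟩

lemma qI_spec (hN : 2 ≤ N) : qI α N ∈ Finset.Ico 1 N ∧
    ∀ k ∈ Finset.Ico 1 N, F α k ≤ F α (qI α N) := by
  have h := Ico_ne hN
  have hs := Classical.choose_spec (Finset.exists_max_image (Finset.Ico 1 N)
      (fun k => Int.fract ((k : ℝ) * α)) h)
  rw [qI, dif_pos h]
  obtain ⟨h1, h2⟩ := hs
  exact ⟨h1, fun k hk => by simpa [F] using h2 k hk⟩

lemma pI_lt (hN : 2 ≤ N) : pI α N < N := (Finset.mem_Ico.1 (pI_spec (α := α) hN).1).2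
lemma pI_ge (hN : 2 ≤ N) : 1 ≤ pI α N := (Finset.mem_Ico.1 (pI_spec (α := α) hN).1).1
lemma qI_lt (hN : 2 ≤ N) : qI α N < N := (Finset.mem_Ico.1 (qI_spec (α := α) hN).1).2
lemma qI_ge (hN : 2 ≤ N) : 1 ≤ qI α N := (Finset.mem_Ico.1 (qI_spec (α := α) hN).1).1

lemma pI_min (hN : 2 ≤ N) {k : ℕ} (h1 : 1 ≤ k) (h2 : k < N) :
    F α (pI α N) ≤ F α k := (pI_spec hN).2 k (Finset.mem_Ico.2 ⟨h1, h2⟩)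
lemma qI_max (hN : 2 ≤ N) {k : ℕ} (h1 : 1 ≤ k) (h2 : k < N) :
    F α k ≤ F α (qI α N) := (qI_spec hN).2 k (Finset.mem_Ico.2 ⟨h1, h2⟩)

/-- p + q ≥ N -/
lemma sum_ge (hα : Irrational α) (hN : 2 ≤ N) : N ≤ pI α N + qI α N := by
  set p := pI α N with hp
  set q := qI α N with hq
  by_contra hc
  push_neg at hc
  have hp1 := pI_ge (α := α) hN
  have hq1 := qI_ge (α := α) hN
  have hs2 : p + q < N := hc
  have hFp : 0 < F α p := F_pos hα (by exact_mod_cast show ((p:ℤ)) ≠ 0 by omega)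
  have hFq : 0 < F α q := F_pos hα (by exact_mod_cast show ((q:ℤ)) ≠ 0 by omega)
  have hadd : F α ((p : ℤ) + q) = Int.fract (F α p + F α q) := F_add_eq _ _
  have hne1 : F α p + F α q ≠ 1 := F_sum_ne_one hα (by exact_mod_cast show ((p:ℤ)+q) ≠ 0 by omega)
  have hcast : ((p + q : ℕ) : ℤ) = (p : ℤ) + q := by push_cast; ring
  rcases lt_or_gt_of_ne hne1 with hlt | hgt
  · have h2 : F α ((p+q : ℕ) : ℤ) = F α p + F α q := by
      rw [hcast, hadd, fract_self_of _ (by positivity) hlt]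
    have hle := qI_max (α := α) hN (k := p + q) (by omega) hs2
    rw [h2] at hle
    linarith
  · have h2 : F α ((p+q : ℕ) : ℤ) = F α p + F α q - 1 := by
      rw [hcast, hadd, fract_of_ge _ (le_of_lt hgt) (by
        have := F_lt_one (α := α) (p : ℤ); have := F_lt_one (α := α) (q : ℤ); linarith)]
    have hge := pI_min (α := α) hN (k := p + q) (by omega) hs2
    rw [h2] at hge
    have := F_lt_one (α := α) (q : ℤ)
    linarith

lemma F_addsub_eq (j k l : ℤ) : F α (j + k - l) = Int.fract (F α j + F α k - F α l) := by
  apply F_eq_fract (α := α) (⌊(j:ℝ)*α⌋ + ⌊(k:ℝ)*α⌋ - ⌊(l:ℝ)*α⌋)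
  unfold F Int.fract; push_cast; ring

lemma gapAt_eq (α : ℝ) (N m : ℕ) {v : ℝ} (hv : 0 < v)
    (hmem : ∃ m' : ℕ, m' < N ∧ Int.fract ((m' : ℝ) * α - (m : ℝ) * α) = v)
    (hlb : ∀ m' : ℕ, m' < N → 0 < Int.fract ((m':ℝ)*α - (m:ℝ)*α) →
      v ≤ Int.fract ((m':ℝ)*α - (m:ℝ)*α)) :
    gapAt α N m = v := by
  apply IsLeast.csInf_eq
  constructor
  · exact ⟨hv, hmem⟩
  · rintro d ⟨hd, m', hm', hfd⟩
    exact hfd ▸ hlb m' hm' (hfd ▸ hd)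

lemma gapAt_left (hα : Irrational α) (hN : 2 ≤ N) {m : ℕ} (hm : m + pI α N < N) :
    gapAt α N m = F α (pI α N) := by
  set p := pI α N with hp
  have hp1 := pI_ge (α := α) hN
  have hpN := pI_lt (α := α) hN
  apply gapAt_eq
  · exact F_pos hα (show (p:ℤ) ≠ 0 by omega)
  · refine ⟨m + p, hm, ?_⟩
    rw [dist_eq, show ((m + p : ℕ):ℤ) - m = (p:ℤ) by omega]
  · intro m' hm' hpos
    rw [dist_eq] at hpos ⊢
    rcases lt_trichotomy m' m with hlt | heq | hgt
    · set k : ℕ := m - m' with hk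
      have hk1 : 1 ≤ k := by omega
      have hkm : k ≤ m := by omega
      rw [show ((m':ℤ) - m) = -(k : ℤ) by omega,
        F_neg hα (show (k:ℤ) ≠ 0 by omega)]
      by_contra hcon
      push_neg at hcon
      have hkp : k + p < N := by omega
      have hgt1 : 1 < F α k + F α p := by linarith
      have hkpv : F α ((k+p:ℕ):ℤ) = F α k + F α p - 1 := by
        rw [show ((k+p:ℕ):ℤ) = (k:ℤ)+p by push_cast; ring, F_add_eq,
          fract_of_ge _ (le_of_lt hgt1) (by
            have := F_lt_one (α:=α) (k:ℤ); have := F_lt_one (α:=α) (p:ℤ); linarith)]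
      have hmin := pI_min (α := α) hN (k := k+p) (by omega) hkp
      rw [hkpv] at hmin
      have := F_lt_one (α := α) (k : ℤ)
      linarith
    · exfalso; rw [heq, show ((m:ℤ) - m) = 0 by ring] at hpos
      simp [F] at hpos
    · rw [show ((m':ℤ) - m) = ((m' - m : ℕ):ℤ) by omega]
      exact pI_min hN (by omega) (by omega)

lemma gapAt_right (hα : Irrational α) (hN : 2 ≤ N) {m : ℕ} (hm1 : qI α N ≤ m) (hm2 : m < N) :
    gapAt α N m = 1 - F α (qI α N) := by
  set q := qI α N with hqdef
  have hq1 := qI_ge (α := α) hN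
  have hqN := qI_lt (α := α) hN
  have hFq1 := F_lt_one (α := α) (q : ℤ)
  apply gapAt_eq
  · linarith
  · refine ⟨m - q, by omega, ?_⟩
    rw [dist_eq, show ((m - q : ℕ):ℤ) - m = -(q:ℤ) by omega,
      F_neg hα (show (q:ℤ) ≠ 0 by omega)]
  · intro m' hm' hpos
    rw [dist_eq] at hpos ⊢
    rcases lt_trichotomy m' m with hlt | heq | hgt
    · set k : ℕ := m - m' with hk
      rw [show ((m':ℤ) - m) = -(k : ℤ) by omega,
        F_neg hα (show (k:ℤ) ≠ 0 by omega)]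
      have := qI_max (α := α) hN (k := k) (by omega) (by omega)
      linarith
    · exfalso; rw [heq, show ((m:ℤ) - m) = 0 by ring] at hpos
      simp [F] at hpos
    · set k : ℕ := m' - m with hk
      rw [show ((m':ℤ) - m) = (k:ℤ) by omega]
      by_contra hcon
      push_neg at hcon
      have hkq : k + q < N := by omega
      have hlt1 : F α k + F α q < 1 := by linarith
      have hkqv : F α ((k+q:ℕ):ℤ) = F α k + F α q := by
        rw [show ((k+q:ℕ):ℤ) = (k:ℤ)+q by push_cast; ring, F_add_eq,
          fract_self_of _ (by have := F_nonneg (α:=α) (k:ℤ); have := F_nonneg (α:=α) (q:ℤ); linarith) hlt1]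
      have hmax := qI_max (α := α) hN (k := k+q) (by omega) hkq
      rw [hkqv] at hmax
      have := F_pos hα (show (k:ℤ) ≠ 0 by omega)
      linarith

lemma FpFq_lt (hα : Irrational α) (hN : 3 ≤ N) : F α (pI α N) < F α (qI α N) := by
  have h2 : 2 ≤ N := by omega
  have h1 : F α ((1:ℕ):ℤ) ≠ F α ((2:ℕ):ℤ) := fun h => by
    have := F_inj hα h; norm_num at this
  have p1 := pI_min (α := α) h2 (k := 1) le_rfl (by omega)
  have p2 := pI_min (α := α) h2 (k := 2) (by omega) (by omega)
  have q1 := qI_max (α := α) h2 (k := 1) le_rfl (by omega)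
  have q2 := qI_max (α := α) h2 (k := 2) (by omega) (by omega)
  rcases lt_or_gt_of_ne h1 with h | h
  · calc F α (pI α N) ≤ F α ((1:ℕ):ℤ) := p1
    _ < F α ((2:ℕ):ℤ) := h
    _ ≤ F α (qI α N) := q2
  · calc F α (pI α N) ≤ F α ((2:ℕ):ℤ) := p2
    _ < F α ((1:ℕ):ℤ) := h
    _ ≤ F α (qI α N) := q1

lemma gapAt_mid (hα : Irrational α) (hN : 2 ≤ N) {m : ℕ}
    (hm1 : N ≤ m + pI α N) (hm2 : m < qI α N) :
    gapAt α N m = F α (pI α N) + 1 - F α (qI α N) := by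
  set p := pI α N with hpdef
  set q := qI α N with hqdef
  have hp1 := pI_ge (α := α) hN
  have hpN := pI_lt (α := α) hN
  have hq1 := qI_ge (α := α) hN
  have hqN := qI_lt (α := α) hN
  have hm0 : 1 ≤ m := by omega
  have hN3 : 3 ≤ N := by omega
  have hpq : F α p < F α q := FpFq_lt hα hN3
  have hFp0 : 0 < F α p := F_pos hα (show (p:ℤ) ≠ 0 by omega)
  have hFq0 : 0 < F α q := F_pos hα (show (q:ℤ) ≠ 0 by omega)
  have hFp1 := F_lt_one (α := α) (p : ℤ)
  have hFq1 := F_lt_one (α := α) (q : ℤ)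
  apply gapAt_eq
  · linarith
  · refine ⟨m + p - q, by omega, ?_⟩
    rw [dist_eq, show ((m + p - q : ℕ):ℤ) - m = (p:ℤ) - q by omega, F_sub_eq,
      fract_of_neg _ (by linarith) (by linarith)]
    ring
  · intro m' hm' hpos
    rw [dist_eq] at hpos ⊢
    rcases lt_trichotomy m' m with hlt | heq | hgt
    · -- left candidates: 1 - F k ≥ c
      set k : ℕ := m - m' with hk
      rw [show ((m':ℤ) - m) = -(k : ℤ) by omega,
        F_neg hα (show (k:ℤ) ≠ 0 by omega)]
      have hk1 : 1 ≤ k := by omega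
      have hkq : k ≤ q - 1 := by omega
      by_contra hcon
      push_neg at hcon   -- 1 - F k < F p + 1 - F q, i.e. F q - F p < F k
      have hFk0 : 0 < F α k := F_pos hα (show (k:ℤ) ≠ 0 by omega)
      have hFk1 := F_lt_one (α := α) (k : ℤ)
      have hFkq : F α k < F α q := by
        rcases lt_or_eq_of_le (qI_max (α := α) hN (k := k) (by omega) (by omega)) with h | h
        · exact h
        · exact absurd (F_inj hα h) (by omega)
      by_cases hcase : k + p < N
      · have hne : F α k + F α p ≠ 1 := F_sum_ne_one hα (show (k:ℤ)+p ≠ 0 by omega)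
        rcases lt_or_gt_of_ne hne with hs | hs
        · have hv : F α ((k+p:ℕ):ℤ) = F α k + F α p := by
            rw [show ((k+p:ℕ):ℤ) = (k:ℤ)+p by push_cast; ring, F_add_eq,
              fract_self_of _ (by linarith) hs]
          have hmax := qI_max (α := α) hN (k := k+p) (by omega) hcase
          rw [hv] at hmax; linarith
        · have hv : F α ((k+p:ℕ):ℤ) = F α k + F α p - 1 := by
            rw [show ((k+p:ℕ):ℤ) = (k:ℤ)+p by push_cast; ring, F_add_eq,
              fract_of_ge _ (le_of_lt hs) (by linarith)]
          have hmin := pI_min (α := α) hN (k := k+p) (by omega) hcase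
          rw [hv] at hmin; linarith
      · -- k + p ≥ N : use t = p + k - q
        set t : ℕ := p + k - q with ht
        have ht1 : 1 ≤ t := by omega
        have htN : t < N := by omega
        have hv : F α ((t:ℕ):ℤ) = F α p + F α k - F α q := by
          rw [show ((t:ℕ):ℤ) = (p:ℤ) + k - q by omega, F_addsub_eq,
            fract_self_of _ (by linarith) (by linarith)]
        have hmin := pI_min (α := α) hN (k := t) ht1 htN
        rw [hv] at hmin; linarith
    · exfalso; rw [heq, show ((m:ℤ) - m) = 0 by ring] at hpos
      simp [F] at hpos
    · -- right candidates : F k ≥ c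
      set k : ℕ := m' - m with hk
      rw [show ((m':ℤ) - m) = (k:ℤ) by omega]
      have hk1 : 1 ≤ k := by omega
      have hkp : k ≤ p - 1 := by omega
      by_contra hcon
      push_neg at hcon   -- F k < F p + 1 - F q
      have hFk1 := F_lt_one (α := α) (k : ℤ)
      have hFpk : F α p ≤ F α k := pI_min (α := α) hN (by omega) (by omega)
      by_cases hcase : k + q < N
      · have hne : F α k + F α q ≠ 1 := F_sum_ne_one hα (show (k:ℤ)+q ≠ 0 by omega)
        rcases lt_or_gt_of_ne hne with hs | hs
        · have hv : F α ((k+q:ℕ):ℤ) = F α k + F α q := by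
            rw [show ((k+q:ℕ):ℤ) = (k:ℤ)+q by push_cast; ring, F_add_eq,
              fract_self_of _ (by linarith) hs]
          have hmax := qI_max (α := α) hN (k := k+q) (by omega) hcase
          rw [hv] at hmax; linarith
        · have hv : F α ((k+q:ℕ):ℤ) = F α k + F α q - 1 := by
            rw [show ((k+q:ℕ):ℤ) = (k:ℤ)+q by push_cast; ring, F_add_eq,
              fract_of_ge _ (le_of_lt hs) (by linarith)]
          have hmin := pI_min (α := α) hN (k := k+q) (by omega) hcase
          rw [hv] at hmin; linarith
      · -- k + q ≥ N : use t = q + k - p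
        set t : ℕ := q + k - p with ht
        have ht1 : 1 ≤ t := by omega
        have htN : t < N := by omega
        have hv : F α ((t:ℕ):ℤ) = F α q + F α k - F α p := by
          rw [show ((t:ℕ):ℤ) = (q:ℤ) + k - p by omega, F_addsub_eq,
            fract_self_of _ (by linarith) (by linarith)]
        have hmax := qI_max (α := α) hN (k := t) ht1 htN
        rw [hv] at hmax
        have : F α k ≤ F α p := by linarith
        have heq2 : F α k = F α p := le_antisymm this hFpk
        have := F_inj hα heq2
        omega

lemma FpFq_le (hN : 2 ≤ N) : F α (pI α N) ≤ F α (qI α N) :=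
  le_trans (pI_min (α := α) hN (k := 1) le_rfl (by omega))
    (qI_max (α := α) hN (k := 1) le_rfl (by omega))

lemma partition (hα : Irrational α) (hN : 2 ≤ N) {m : ℕ} (hm : m < N) :
    (m + pI α N < N ∧ ¬ qI α N ≤ m) ∨ (qI α N ≤ m ∧ ¬ m + pI α N < N) ∨
    (N ≤ m + pI α N ∧ m < qI α N) := by
  have h1 := sum_ge hα hN
  have h2 := pI_lt (α := α) hN
  have h3 := qI_lt (α := α) hN
  have h4 := pI_ge (α := α) hN
  have h5 := qI_ge (α := α) hN
  omega

lemma a_mem (hα : Irrational α) (hN : 2 ≤ N) : F α (pI α N) ∈ gapSet α N := by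
  have hpN := pI_lt (α := α) hN
  exact Finset.mem_image.2 ⟨0, Finset.mem_range.2 (by omega), gapAt_left hα hN (by omega)⟩

lemma b_mem (hα : Irrational α) (hN : 2 ≤ N) : 1 - F α (qI α N) ∈ gapSet α N := by
  have hqN := qI_lt (α := α) hN
  exact Finset.mem_image.2 ⟨N - 1, Finset.mem_range.2 (by omega),
    gapAt_right hα hN (by omega) (by omega)⟩

lemma c_mem (hα : Irrational α) (hN : 2 ≤ N) (h3 : N < pI α N + qI α N) :
    F α (pI α N) + 1 - F α (qI α N) ∈ gapSet α N := by
  have hp1 := pI_ge (α := α) hN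
  have hp2 := pI_lt (α := α) hN
  have hq2 := qI_lt (α := α) hN
  exact Finset.mem_image.2 ⟨N - pI α N, Finset.mem_range.2 (by omega),
    gapAt_mid hα hN (by omega) (by omega)⟩

lemma gapSet_sub (hα : Irrational α) (hN : 2 ≤ N) {g : ℝ} (hg : g ∈ gapSet α N) :
    g = F α (pI α N) ∨ g = 1 - F α (qI α N) ∨ g = F α (pI α N) + 1 - F α (qI α N) := by
  obtain ⟨m, hm, rfl⟩ := Finset.mem_image.1 hg
  rw [Finset.mem_range] at hm
  rcases partition hα hN hm with ⟨h1, _⟩ | ⟨h1, h2⟩ | ⟨h1, h2⟩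
  · exact Or.inl (gapAt_left hα hN h1)
  · exact Or.inr (Or.inl (gapAt_right hα hN h1 hm))
  · exact Or.inr (Or.inr (gapAt_mid hα hN h1 h2))

lemma a_ne_b (hα : Irrational α) (hN : 2 ≤ N) : F α (pI α N) ≠ 1 - F α (qI α N) := by
  intro h
  have hp1 := pI_ge (α := α) hN
  have hq1 := qI_ge (α := α) hN
  exact F_sum_ne_one hα (show ((pI α N : ℤ)) + qI α N ≠ 0 by omega) (by linarith)

lemma card_eq_two (hα : Irrational α) (hN : 2 ≤ N) (h : pI α N + qI α N = N) :
    (gapSet α N).card = 2 := by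
  classical
  have hset : gapSet α N = {F α (pI α N), 1 - F α (qI α N)} := by
    apply Finset.Subset.antisymm
    · intro g hg
      rcases gapSet_sub hα hN hg with h1 | h1 | h1
      · simp [h1]
      · simp [h1]
      · exfalso
        obtain ⟨m, hm, hgm⟩ := Finset.mem_image.1 hg
        rw [Finset.mem_range] at hm
        have hq1 := qI_ge (α := α) hN
        have hp1 := pI_ge (α := α) hN
        have hFp0 : 0 < F α (pI α N) := F_pos hα (show ((pI α N : ℕ):ℤ) ≠ 0 by omega)
        have hFq1 := F_lt_one (α := α) ((qI α N : ℕ) : ℤ)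
        rcases partition hα hN hm with ⟨c1, c2⟩ | ⟨c1, c2⟩ | ⟨c1, c2⟩
        · rw [gapAt_left hα hN c1, h1] at hgm; linarith
        · rw [gapAt_right hα hN c1 hm, h1] at hgm; linarith
        · omega
    · intro g hg
      simp only [Finset.mem_insert, Finset.mem_singleton] at hg
      rcases hg with rfl | rfl
      · exact a_mem hα hN
      · exact b_mem hα hN
  rw [hset, Finset.card_insert_of_notMem (by simp [a_ne_b hα hN]), Finset.card_singleton]

lemma card_ne_two (hα : Irrational α) (hN : 2 ≤ N) (h3 : N < pI α N + qI α N) :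
    (gapSet α N).card ≠ 2 := by
  classical
  have hp1 := pI_ge (α := α) hN
  have hq1 := qI_ge (α := α) hN
  have hFp0 : 0 < F α (pI α N) := F_pos hα (show ((pI α N : ℤ)) ≠ 0 by omega)
  have hFq1 := F_lt_one (α := α) (qI α N : ℤ)
  have hb0 : 0 < 1 - F α (qI α N) := by linarith
  have hsub : ({F α (pI α N), 1 - F α (qI α N), F α (pI α N) + 1 - F α (qI α N)} : Finset ℝ)
      ⊆ gapSet α N := by
    intro g hg
    simp only [Finset.mem_insert, Finset.mem_singleton] at hg
    rcases hg with rfl | rfl | rfl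
    · exact a_mem hα hN
    · exact b_mem hα hN
    · exact c_mem hα hN h3
  have hcard : ({F α (pI α N), 1 - F α (qI α N), F α (pI α N) + 1 - F α (qI α N)} : Finset ℝ).card = 3 := by
    rw [Finset.card_insert_of_notMem (by
        simp only [Finset.mem_insert, Finset.mem_singleton]
        push_neg
        refine ⟨a_ne_b hα hN, by intro h; linarith⟩),
      Finset.card_insert_of_notMem (by simp; intro h; linarith), Finset.card_singleton]
  have := Finset.card_le_card hsub
  omega

lemma records (hα : Irrational α) (hN : 2 ≤ N) (h3 : N < pI α N + qI α N) :
    pI α (N + 1) = pI α N ∧ qI α (N + 1) = qI α N := by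
  set p := pI α N with hpdef
  set q := qI α N with hqdef
  have hp1 := pI_ge (α := α) hN
  have hpN := pI_lt (α := α) hN
  have hq1 := qI_ge (α := α) hN
  have hqN := qI_lt (α := α) hN
  have hFpq : F α p ≤ F α q := FpFq_le hN
  have hNp : F α ((N:ℕ):ℤ) ≠ F α p := fun h => by have := F_inj hα h; omega
  have hNq : F α ((N:ℕ):ℤ) ≠ F α q := fun h => by have := F_inj hα h; omega
  have hFN0 : 0 < F α ((N:ℕ):ℤ) := F_pos hα (show ((N:ℕ):ℤ) ≠ 0 by omega)
  have hFN1 := F_lt_one (α := α) ((N:ℕ):ℤ)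
  have hFq1 := F_lt_one (α := α) (q:ℤ)
  have hFp0 : 0 < F α p := F_pos hα (show (p:ℤ) ≠ 0 by omega)
  -- F p < F N
  have hlow : F α p < F α ((N:ℕ):ℤ) := by
    rcases lt_or_gt_of_ne hNp with h | h
    · exfalso
      -- F N < F p
      have hk : F α ((N - p : ℕ):ℤ) = F α ((N:ℕ):ℤ) - F α p + 1 := by
        rw [show ((N - p : ℕ):ℤ) = ((N:ℕ):ℤ) - p by omega, F_sub_eq,
          fract_of_neg _ (by linarith) (by linarith)]
      have hmax := qI_max (α := α) hN (k := N - p) (by omega) (by omega)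
      rw [hk] at hmax
      have hFNq : F α ((N:ℕ):ℤ) < F α q := by linarith
      have hk' : F α ((N - q : ℕ):ℤ) = F α ((N:ℕ):ℤ) - F α q + 1 := by
        rw [show ((N - q : ℕ):ℤ) = ((N:ℕ):ℤ) - q by omega, F_sub_eq,
          fract_of_neg _ (by linarith) (by linarith)]
      have hmin := pI_min (α := α) hN (k := N - q) (by omega) (by omega)
      rw [hk'] at hmin
      have heq : F α ((N - q : ℕ):ℤ) = F α p := by rw [hk']; linarith
      have := F_inj hα heq
      omega
    · exact h
  -- F N < F q
  have hhigh : F α ((N:ℕ):ℤ) < F α q := by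
    rcases lt_or_gt_of_ne hNq with h | h
    · exact h
    · exfalso
      have hk : F α ((N - q : ℕ):ℤ) = F α ((N:ℕ):ℤ) - F α q := by
        rw [show ((N - q : ℕ):ℤ) = ((N:ℕ):ℤ) - q by omega, F_sub_eq,
          fract_self_of _ (by linarith) (by linarith)]
      have hmin := pI_min (α := α) hN (k := N - q) (by omega) (by omega)
      rw [hk] at hmin
      have hk' : F α ((N - p : ℕ):ℤ) = F α ((N:ℕ):ℤ) - F α p := by
        rw [show ((N - p : ℕ):ℤ) = ((N:ℕ):ℤ) - p by omega, F_sub_eq,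
          fract_self_of _ (by linarith) (by linarith)]
      have hmax := qI_max (α := α) hN (k := N - p) (by omega) (by omega)
      rw [hk'] at hmax
      have heq : F α ((N - p : ℕ):ℤ) = F α q := by rw [hk']; linarith
      have := F_inj hα heq
      omega
  have hN1 : 2 ≤ N + 1 := by omega
  constructor
  · have hmem := pI_spec (α := α) (N := N + 1) hN1
    have hle : F α (pI α (N+1)) ≤ F α p :=
      hmem.2 p (Finset.mem_Ico.2 ⟨by omega, by omega⟩)
    have hne : pI α (N+1) ≠ N := by
      intro h
      rw [h] at hle
      linarith
    have hin : pI α (N+1) ∈ Finset.Ico 1 N := by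
      have := Finset.mem_Ico.1 hmem.1
      exact Finset.mem_Ico.2 ⟨this.1, by omega⟩
    have hge : F α p ≤ F α (pI α (N+1)) := (pI_spec (α := α) hN).2 _ hin
    have := F_inj hα (le_antisymm hle hge)
    omega
  · have hmem := qI_spec (α := α) (N := N + 1) hN1
    have hle : F α q ≤ F α (qI α (N+1)) :=
      hmem.2 q (Finset.mem_Ico.2 ⟨by omega, by omega⟩)
    have hne : qI α (N+1) ≠ N := by
      intro h
      rw [h] at hle
      linarith
    have hin : qI α (N+1) ∈ Finset.Ico 1 N := by
      have := Finset.mem_Ico.1 hmem.1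
      exact Finset.mem_Ico.2 ⟨this.1, by omega⟩
    have hge : F α (qI α (N+1)) ≤ F α q := (qI_spec (α := α) hN).2 _ hin
    have := F_inj hα (le_antisymm hge hle)
    omega

lemma pq_const (hα : Irrational α) (hN : 2 ≤ N) :
    ∀ K, N ≤ K → K ≤ pI α N + qI α N → pI α K = pI α N ∧ qI α K = qI α N := by
  intro K
  induction K with
  | zero => intro h1 h2; omega
  | succ K ih =>
    intro h1 h2
    rcases Nat.lt_or_ge N (K + 1) with h | h
    · have hK : N ≤ K := by omega
      obtain ⟨hp, hq⟩ := ih hK (by omega)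
      have h3 : K < pI α K + qI α K := by rw [hp, hq]; omega
      obtain ⟨hp', hq'⟩ := records hα (by omega) h3
      exact ⟨hp'.trans hp, hq'.trans hq⟩
    · have : N = K + 1 := by omega
      simp [this]

open Classical in
lemma count_c (hα : Irrational α) (hN : 2 ≤ N) (h3 : N < pI α N + qI α N) :
    (gapMult α N).count (F α (pI α N) + 1 - F α (qI α N)) = pI α N + qI α N - N := by
  classical
  have hp1 := pI_ge (α := α) hN
  have hp2 := pI_lt (α := α) hN
  have hq1 := qI_ge (α := α) hN
  have hq2 := qI_lt (α := α) hN
  have hFp0 : 0 < F α (pI α N) := F_pos hα (show ((pI α N : ℕ):ℤ) ≠ 0 by omega)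
  have hFq1 := F_lt_one (α := α) ((qI α N : ℕ):ℤ)
  rw [gapMult, Multiset.count_map]
  have hiff : ∀ m ∈ Multiset.range N,
      ((F α (pI α N) + 1 - F α (qI α N) = gapAt α N m) ↔ (N - pI α N ≤ m ∧ m < qI α N)) := by
    intro m hm
    rw [Multiset.mem_range] at hm
    constructor
    · intro hc
      rcases partition hα hN hm with ⟨c1, c2⟩ | ⟨c1, c2⟩ | ⟨c1, c2⟩
      · rw [gapAt_left hα hN c1] at hc; linarith
      · rw [gapAt_right hα hN c1 hm] at hc; linarith
      · omega
    · intro ⟨h1, h2⟩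
      rw [gapAt_mid hα hN (by omega) h2]
  rw [Multiset.filter_congr hiff]
  have hval : (Multiset.range N).filter (fun m => N - pI α N ≤ m ∧ m < qI α N)
      = ((Finset.range N).filter (fun m => N - pI α N ≤ m ∧ m < qI α N)).val := by
    rw [Finset.filter_val, Finset.range_val]
  rw [hval]
  have hIco : (Finset.range N).filter (fun m => N - pI α N ≤ m ∧ m < qI α N)
      = Finset.Ico (N - pI α N) (qI α N) := by
    ext m
    simp only [Finset.mem_filter, Finset.mem_range, Finset.mem_Ico]
    omega
  rw [hIco]
  have : Multiset.card (Finset.Ico (N - pI α N) (qI α N)).val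
      = (Finset.Ico (N - pI α N) (qI α N)).card := rfl
  rw [this, Nat.card_Ico]
  omega

end ThreeGap


open Classical in
theorem count_of_largest_gaps (α : ℝ) (hα : Irrational α) (M N R : ℕ)
    (hrelM : (gapSet α M).card = 2) (hrelR : (gapSet α R).card = 2)
    (hbetween : ∀ K : ℕ, M < K → K < R → (gapSet α K).card ≠ 2)
    (hMN : M < N) (hNR : N < R) :
    ∃ Δ₃ ∈ gapSet α N, (∀ g ∈ gapSet α N, g ≤ Δ₃) ∧
      (gapMult α N).count Δ₃ = R - N := by
  classical
  have hM2 : 2 ≤ M := by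
    by_contra h
    push_neg at h
    have hle : (gapSet α M).card ≤ M := by
      calc (gapSet α M).card ≤ (Finset.range M).card := Finset.card_image_le
      _ = M := Finset.card_range M
    omega
  have hN2 : 2 ≤ N := by omega
  have hge := ThreeGap.sum_ge hα hN2
  have h3 : N < ThreeGap.pI α N + ThreeGap.qI α N := by
    rcases lt_or_eq_of_le hge with h | h
    · exact h
    · exact absurd (ThreeGap.card_eq_two hα hN2 h.symm) (hbetween N hMN hNR)
  have hconst := ThreeGap.pq_const hα hN2
  have hcardS : (gapSet α (ThreeGap.pI α N + ThreeGap.qI α N)).card = 2 := by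
    obtain ⟨hp, hq⟩ := hconst (ThreeGap.pI α N + ThreeGap.qI α N) (by omega) le_rfl
    exact ThreeGap.card_eq_two hα (by omega) (by rw [hp, hq])
  have hRS : R = ThreeGap.pI α N + ThreeGap.qI α N := by
    rcases lt_trichotomy R (ThreeGap.pI α N + ThreeGap.qI α N) with h | h | h
    · exfalso
      obtain ⟨hp, hq⟩ := hconst R (by omega) (by omega)
      exact ThreeGap.card_ne_two hα (by omega) (by rw [hp, hq]; omega) hrelR
    · exact h
    · exact absurd hcardS (hbetween _ (by omega) h)
  refine ⟨ThreeGap.F α (ThreeGap.pI α N) + 1 - ThreeGap.F α (ThreeGap.qI α N),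
    ThreeGap.c_mem hα hN2 h3, ?_, ?_⟩
  · intro g hg
    have hp1 := ThreeGap.pI_ge (α := α) hN2
    have hq1 := ThreeGap.qI_ge (α := α) hN2
    have hFp0 : 0 < ThreeGap.F α (ThreeGap.pI α N) :=
      ThreeGap.F_pos hα (show ((ThreeGap.pI α N : ℕ):ℤ) ≠ 0 by omega)
    have hFq1 := ThreeGap.F_lt_one (α := α) ((ThreeGap.qI α N : ℕ):ℤ)
    rcases ThreeGap.gapSet_sub hα hN2 hg with h | h | h <;> rw [h] <;> linarith
  · rw [ThreeGap.count_c hα hN2 h3]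
    omega
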